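/- Let B be a Banach space with an unconditional Schauder basis (z_i). Then (z_i) fails to be boundedly complete if and only if B contains a closed subspace linearly isomorphic to c₀. -/

import Mathlib

open Filter

/-- `x` is a Schauder basis of `B`. -/
def IsSchauderBasis {B : Type*} [NormedAddCommGroup B] [NormedSpace ℝ B] (x : ℕ → B) : Prop :=
  ∀ y : B, ∃! a : ℕ → ℝ,
    Tendsto (fun N => ∑ i ∈ Finset.range N, a i • x i) atTop (nhds y)

/-- The basis `x` is unconditional: every basis expansion converges unconditionally. -/
def IsUnconditional {B : Type*} [NormedAddCommGroup B] [NormedSpace ℝ B] (x : ℕ → B) : Prop :=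
  ∀ (y : B) (a : ℕ → ℝ),
    Tendsto (fun N => ∑ i ∈ Finset.range N, a i • x i) atTop (nhds y) →
    HasSum (fun i => a i • x i) y

/-- The basis `x` is boundedly complete. -/
def BoundedlyComplete {B : Type*} [NormedAddCommGroup B] [NormedSpace ℝ B] (x : ℕ → B) : Prop :=
  ∀ a : ℕ → ℝ, (∃ M : ℝ, ∀ N, ‖∑ i ∈ Finset.range N, a i • x i‖ ≤ M) →
    ∃ y : B, Tendsto (fun N => ∑ i ∈ Finset.range N, a i • x i) atTop (nhds y)

section Aux

variable {B : Type*} [NormedAddCommGroup B] [NormedSpace ℝ B]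

lemma bddAbove_partial_sums {f : ℕ → B} (hf : Summable f) :
    BddAbove (Set.range fun F : Finset ℕ => ‖∑ i ∈ F, f i‖) := by
  obtain ⟨S, hS⟩ := hf
  obtain ⟨F₀, hF₀⟩ := Filter.eventually_atTop.mp
    (hS.eventually (Metric.ball_mem_nhds S one_pos))
  refine ⟨‖S‖ + 1 + ∑ i ∈ F₀, ‖f i‖, ?_⟩
  rintro x ⟨F, rfl⟩
  have h1 : ∑ i ∈ F, f i = ∑ i ∈ F ∪ F₀, f i - ∑ i ∈ (F ∪ F₀) \ F, f i := by
    rw [eq_sub_iff_add_eq, add_comm, Finset.sum_sdiff (Finset.subset_union_left)]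
  have h2 : ‖∑ i ∈ F ∪ F₀, f i‖ ≤ ‖S‖ + 1 := by
    have := hF₀ (F ∪ F₀) Finset.subset_union_right
    have hd : dist (∑ i ∈ F ∪ F₀, f i) S < 1 := by simpa [Metric.mem_ball] using this
    calc ‖∑ i ∈ F ∪ F₀, f i‖ ≤ ‖S‖ + dist (∑ i ∈ F ∪ F₀, f i) S := by
          rw [dist_eq_norm]
          calc ‖∑ i ∈ F ∪ F₀, f i‖ = ‖S + (∑ i ∈ F ∪ F₀, f i - S)‖ := by
                congr 1; abel
            _ ≤ ‖S‖ + ‖∑ i ∈ F ∪ F₀, f i - S‖ := norm_add_le _ _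
      _ ≤ ‖S‖ + 1 := by linarith
  have h3 : ‖∑ i ∈ (F ∪ F₀) \ F, f i‖ ≤ ∑ i ∈ F₀, ‖f i‖ := by
    calc ‖∑ i ∈ (F ∪ F₀) \ F, f i‖ ≤ ∑ i ∈ (F ∪ F₀) \ F, ‖f i‖ := norm_sum_le _ _
      _ ≤ ∑ i ∈ F₀, ‖f i‖ := Finset.sum_le_sum_of_subset_of_nonneg
          (by intro i hi; simp at hi ⊢; tauto) (fun _ _ _ => norm_nonneg _)
  calc ‖∑ i ∈ F, f i‖ ≤ ‖∑ i ∈ F ∪ F₀, f i‖ + ‖∑ i ∈ (F ∪ F₀) \ F, f i‖ := by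
        rw [h1]; exact norm_sub_le _ _
    _ ≤ ‖S‖ + 1 + ∑ i ∈ F₀, ‖f i‖ := by linarith

/-- Multiplier lemma: if all subset sums of `v` over subsets of `F` are bounded by `C`, then
sums with multipliers bounded by `D` are bounded by `2*(C*D)`. -/
lemma norm_sum_smul_le_of_subsets (v : ℕ → B) (F : Finset ℕ) {C D : ℝ} (hD : 0 ≤ D)
    (hC : ∀ S ⊆ F, ‖∑ i ∈ S, v i‖ ≤ C) (c : ℕ → ℝ) (hc : ∀ i ∈ F, |c i| ≤ D) :
    ‖∑ i ∈ F, c i • v i‖ ≤ 2 * (C * D) := by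
  have hC0 : 0 ≤ C := by simpa using hC ∅ (Finset.empty_subset F)
  rcases eq_or_ne (∑ i ∈ F, c i • v i) 0 with h0 | h0
  · rw [h0, norm_zero]; positivity
  obtain ⟨g, hg1, hgx⟩ := exists_dual_vector ℝ _ (norm_ne_zero_iff.mpr h0)
  have key : ∀ S : Finset ℕ, S ⊆ F → ∑ i ∈ S, |g (v i)| ≤ 2 * C := by
    intro S hS
    set P := S.filter (fun i => 0 ≤ g (v i)) with hP
    have hPS : P ⊆ S := Finset.filter_subset _ _
    have hA : ∑ x ∈ S \ P, |g (v x)| = -∑ x ∈ S \ P, g (v x) := by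
      have h : ∀ x ∈ S \ P, |g (v x)| = -g (v x) := by
        intro i hi
        simp only [Finset.mem_sdiff, hP, Finset.mem_filter] at hi
        have : g (v i) < 0 := by
          by_contra h; exact hi.2 ⟨hi.1, not_lt.mp h⟩
        rw [abs_of_neg this]
      rw [Finset.sum_congr rfl h, Finset.sum_neg_distrib]
    have hB : ∑ x ∈ P, |g (v x)| = ∑ x ∈ P, g (v x) := by
      apply Finset.sum_congr rfl
      intro i hi
      simp only [hP, Finset.mem_filter] at hi
      rw [abs_of_nonneg hi.2]
    have hsplit : ∑ i ∈ S, |g (v i)| = ∑ i ∈ P, g (v i) - ∑ i ∈ S \ P, g (v i) := by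
      rw [← Finset.sum_sdiff hPS, hA, hB]; ring
    have hgP : ∑ i ∈ P, g (v i) ≤ C := by
      calc ∑ i ∈ P, g (v i) = g (∑ i ∈ P, v i) := (map_sum g v P).symm
        _ ≤ ‖g (∑ i ∈ P, v i)‖ := le_abs_self _
        _ ≤ ‖g‖ * ‖∑ i ∈ P, v i‖ := g.le_opNorm _
        _ ≤ 1 * C := by
            rw [hg1]
            exact mul_le_mul_of_nonneg_left (hC P (hPS.trans hS)) zero_le_one
        _ = C := one_mul C
    have hgN : -∑ i ∈ S \ P, g (v i) ≤ C := by
      calc -∑ i ∈ S \ P, g (v i) = g (-∑ i ∈ S \ P, v i) := by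
            rw [map_neg, map_sum]
        _ ≤ ‖g (-∑ i ∈ S \ P, v i)‖ := le_abs_self _
        _ ≤ ‖g‖ * ‖-∑ i ∈ S \ P, v i‖ := g.le_opNorm _
        _ ≤ 1 * C := by
            rw [hg1, norm_neg]
            exact mul_le_mul_of_nonneg_left (hC _ ((Finset.sdiff_subset).trans hS)) zero_le_one
        _ = C := one_mul C
    rw [hsplit]; linarith
  have : ‖∑ i ∈ F, c i • v i‖ = g (∑ i ∈ F, c i • v i) := by
    exact_mod_cast hgx.symm
  rw [this, map_sum]
  calc ∑ i ∈ F, g (c i • v i) ≤ ∑ i ∈ F, D * |g (v i)| := by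
        apply Finset.sum_le_sum
        intro i hi
        rw [map_smul, smul_eq_mul]
        calc c i * g (v i) ≤ |c i * g (v i)| := le_abs_self _
          _ = |c i| * |g (v i)| := abs_mul _ _
          _ ≤ D * |g (v i)| := mul_le_mul_of_nonneg_right (hc i hi) (abs_nonneg _)
    _ = D * ∑ i ∈ F, |g (v i)| := (Finset.mul_sum _ _ _).symm
    _ ≤ D * (2 * C) := mul_le_mul_of_nonneg_left (key F (le_refl _)) hD
    _ = 2 * (C * D) := by ring

end Aux

section ESpace

variable {B : Type*} [NormedAddCommGroup B] [NormedSpace ℝ B]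

/-- The space of coefficient sequences whose expansion is unconditionally summable,
with the sup-over-finsets norm.  The hypothesis `hz` is needed for norm nondegeneracy. -/
structure Esp (z : ℕ → B) (hz : ∀ i, z i ≠ 0) where
  seq : ℕ → ℝ
  summable' : Summable fun i => seq i • z i

namespace Esp

variable {z : ℕ → B} {hz : ∀ i, z i ≠ 0}

lemma ext' {a b : Esp z hz} (h : a.seq = b.seq) : a = b := by
  cases a; cases b; simpa using h

instance : Add (Esp z hz) :=
  ⟨fun a b => ⟨a.seq + b.seq, by
    have := a.summable'.add b.summable'
    simpa [Pi.add_apply, add_smul] using this⟩⟩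

instance : Zero (Esp z hz) := ⟨⟨0, by simpa using summable_zero⟩⟩

instance : Neg (Esp z hz) :=
  ⟨fun a => ⟨-a.seq, by
    have := a.summable'.neg
    simpa [Pi.neg_apply, neg_smul] using this⟩⟩

instance : SMul ℝ (Esp z hz) :=
  ⟨fun r a => ⟨r • a.seq, by
    have := a.summable'.const_smul r
    simpa [Pi.smul_apply, smul_smul] using this⟩⟩

lemma seq_add (a b : Esp z hz) : (a + b).seq = a.seq + b.seq := rfl
lemma seq_zero : (0 : Esp z hz).seq = 0 := rfl
lemma seq_neg (a : Esp z hz) : (-a).seq = -a.seq := rfl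
lemma seq_smul (r : ℝ) (a : Esp z hz) : (r • a).seq = r • a.seq := rfl

instance : AddCommGroup (Esp z hz) where
  add_assoc a b c := ext' (by simp [seq_add, add_assoc])
  zero_add a := ext' (by simp [seq_add, seq_zero])
  add_zero a := ext' (by simp [seq_add, seq_zero])
  nsmul := nsmulRec
  zsmul := zsmulRec
  neg_add_cancel a := ext' (by simp [seq_add, seq_neg, seq_zero])
  add_comm a b := ext' (by simp [seq_add, add_comm])

lemma seq_sub (a b : Esp z hz) : (a - b).seq = a.seq - b.seq := by
  show (a + -b).seq = _
  rw [seq_add, seq_neg]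
  funext i; simp [sub_eq_add_neg]

instance : Module ℝ (Esp z hz) where
  one_smul a := ext' (by simp [seq_smul])
  mul_smul r s a := ext' (by simp [seq_smul, mul_smul])
  smul_zero r := ext' (by simp [seq_smul, seq_zero])
  smul_add r a b := ext' (by simp [seq_smul, seq_add, smul_add])
  add_smul r s a := ext' (by funext i; simp [seq_smul, seq_add]; ring)
  zero_smul a := ext' (by simp [seq_smul, seq_zero])

noncomputable def enorm (a : Esp z hz) : ℝ := ⨆ F : Finset ℕ, ‖∑ i ∈ F, a.seq i • z i‖

lemma norm_finsetSum_le0 (a : Esp z hz) (F : Finset ℕ) :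
    ‖∑ i ∈ F, a.seq i • z i‖ ≤ a.enorm :=
  le_ciSup (bddAbove_partial_sums a.summable') F

lemma enorm_nonneg (a : Esp z hz) : 0 ≤ a.enorm := by
  have := a.norm_finsetSum_le0 ∅
  simpa using this

lemma enorm_le (a : Esp z hz) {C : ℝ} (h : ∀ F : Finset ℕ, ‖∑ i ∈ F, a.seq i • z i‖ ≤ C) :
    a.enorm ≤ C := ciSup_le h

noncomputable instance : NormedAddCommGroup (Esp z hz) :=
  AddGroupNorm.toNormedAddCommGroup
  { toFun := enorm
    map_zero' := by
      apply le_antisymm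
      · exact enorm_le _ (fun F => by simp [seq_zero])
      · exact enorm_nonneg 0
    add_le' := fun a b => by
      apply enorm_le
      intro F
      have h : ∑ i ∈ F, (a + b).seq i • z i
          = ∑ i ∈ F, a.seq i • z i + ∑ i ∈ F, b.seq i • z i := by
        rw [← Finset.sum_add_distrib]
        apply Finset.sum_congr rfl
        intro i _
        rw [seq_add]
        simp [add_smul]
      rw [h]
      exact le_trans (norm_add_le _ _)
        (add_le_add (a.norm_finsetSum_le0 F) (b.norm_finsetSum_le0 F))
    neg' := fun a => by
      show enorm (-a) = enorm a
      unfold enorm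
      congr 1
      funext F
      rw [seq_neg]
      simp [neg_smul]
    eq_zero_of_map_eq_zero' := fun a ha => by
      apply ext'
      funext i
      have h1 : ‖a.seq i • z i‖ ≤ 0 := by
        have h := a.norm_finsetSum_le0 {i}
        have ha' : a.enorm = 0 := ha
        rw [ha'] at h
        simpa using h
      have h2 : a.seq i • z i = 0 := by
        have := le_antisymm h1 (norm_nonneg _)
        rwa [norm_eq_zero] at this
      rcases smul_eq_zero.mp h2 with h | h
      · exact h
      · exact absurd h (hz i) }

lemma norm_def (a : Esp z hz) : ‖a‖ = a.enorm := rfl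

lemma norm_finsetSum_le (a : Esp z hz) (F : Finset ℕ) :
    ‖∑ i ∈ F, a.seq i • z i‖ ≤ ‖a‖ := a.norm_finsetSum_le0 F

lemma norm_le (a : Esp z hz) {C : ℝ} (h : ∀ F : Finset ℕ, ‖∑ i ∈ F, a.seq i • z i‖ ≤ C) :
    ‖a‖ ≤ C := enorm_le a h

noncomputable instance : NormedSpace ℝ (Esp z hz) where
  norm_smul_le r a := by
    rw [norm_def, norm_def]
    apply enorm_le
    intro F
    have h : ∑ i ∈ F, (r • a).seq i • z i = r • ∑ i ∈ F, a.seq i • z i := by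
      rw [Finset.smul_sum]
      apply Finset.sum_congr rfl
      intro i _
      rw [seq_smul]
      simp [smul_smul]
    rw [h, norm_smul]
    have : (enorm (r • a) : ℝ) = enorm (r•a) := rfl
    exact mul_le_mul_of_nonneg_left (a.norm_finsetSum_le0 F) (norm_nonneg _)

end Esp

end ESpace

section Complete

variable {B : Type*} [NormedAddCommGroup B] [NormedSpace ℝ B]
variable {z : ℕ → B} {hz : ∀ i, z i ≠ 0}

namespace Esp

lemma norm_single (a : Esp z hz) (i : ℕ) : ‖a.seq i • z i‖ ≤ ‖a‖ := by
  have := a.norm_finsetSum_le {i}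
  simpa using this

instance [CompleteSpace B] : CompleteSpace (Esp z hz) := by
  apply Metric.complete_of_cauchySeq_tendsto
  intro u hu
  -- coordinatewise Cauchy
  have hzpos : ∀ i, 0 < ‖z i‖ := fun i => norm_pos_iff.mpr (hz i)
  have hcoord : ∀ i, CauchySeq fun n => (u n).seq i := by
    intro i
    rw [Metric.cauchySeq_iff]
    intro ε hε
    obtain ⟨N, hN⟩ := Metric.cauchySeq_iff.mp hu (ε * ‖z i‖) (mul_pos hε (hzpos i))
    refine ⟨N, fun m hm n hn => ?_⟩
    have h1 : ‖(u m - u n).seq i • z i‖ ≤ ‖u m - u n‖ := norm_single _ i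
    have h2 : ‖(u m - u n).seq i • z i‖ = |(u m).seq i - (u n).seq i| * ‖z i‖ := by
      rw [seq_sub, norm_smul]
      simp [Real.norm_eq_abs]
    have h3 : ‖u m - u n‖ < ε * ‖z i‖ := by
      rw [← dist_eq_norm]
      exact hN m hm n hn
    rw [Real.dist_eq]
    have := lt_of_le_of_lt (h2 ▸ h1) h3
    exact lt_of_mul_lt_mul_right (by linarith) (le_of_lt (hzpos i))
  choose a ha using fun i => cauchySeq_tendsto_of_complete (hcoord i)
  -- uniform approximation
  have key : ∀ ε : ℝ, 0 < ε → ∃ n₀, ∀ n ≥ n₀, ∀ F : Finset ℕ,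
      ‖∑ i ∈ F, (a i - (u n).seq i) • z i‖ ≤ ε := by
    intro ε hε
    obtain ⟨n₀, hn₀⟩ := Metric.cauchySeq_iff.mp hu ε hε
    refine ⟨n₀, fun n hn F => ?_⟩
    have htend : Tendsto (fun m => ∑ i ∈ F, ((u m).seq i - (u n).seq i) • z i) atTop
        (nhds (∑ i ∈ F, (a i - (u n).seq i) • z i)) := by
      apply tendsto_finset_sum
      intro i _
      exact (((ha i).sub tendsto_const_nhds).smul_const (z i))
    apply le_of_tendsto htend.norm
    filter_upwards [Filter.eventually_ge_atTop n₀] with m hm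
    have heq : ∑ i ∈ F, ((u m).seq i - (u n).seq i) • z i
        = ∑ i ∈ F, (u m - u n).seq i • z i := by
      apply Finset.sum_congr rfl
      intro i _
      rw [seq_sub]
      simp
    rw [heq]
    calc ‖∑ i ∈ F, (u m - u n).seq i • z i‖ ≤ ‖u m - u n‖ := norm_finsetSum_le _ F
      _ = dist (u m) (u n) := (dist_eq_norm _ _).symm
      _ ≤ ε := le_of_lt (hn₀ m hm n hn)
  -- summability of the limit
  have hsum : Summable fun i => a i • z i := by
    rw [summable_iff_vanishing]
    intro e he
    obtain ⟨δ, hδ, hball⟩ := Metric.mem_nhds_iff.mp he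
    obtain ⟨n, hn⟩ := key (δ/3) (by linarith)
    have hn' := hn n (le_refl n)
    obtain ⟨s, hs⟩ := summable_iff_vanishing.mp (u n).summable'
      (Metric.ball 0 (δ/3)) (Metric.ball_mem_nhds 0 (by linarith))
    refine ⟨s, fun t ht => ?_⟩
    apply hball
    have hsplit : ∑ i ∈ t, a i • z i
        = ∑ i ∈ t, (a i - (u n).seq i) • z i + ∑ i ∈ t, (u n).seq i • z i := by
      rw [← Finset.sum_add_distrib]
      apply Finset.sum_congr rfl
      intro i _
      rw [← add_smul]
      simp
    have h1 := hn' t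
    have h2 : ‖∑ i ∈ t, (u n).seq i • z i‖ < δ/3 := by
      have := hs t ht
      simpa [Metric.mem_ball, dist_eq_norm] using this
    simp only [Metric.mem_ball, dist_eq_norm, sub_zero]
    rw [hsplit]
    calc ‖∑ i ∈ t, (a i - (u n).seq i) • z i + ∑ i ∈ t, (u n).seq i • z i‖
        ≤ ‖∑ i ∈ t, (a i - (u n).seq i) • z i‖ + ‖∑ i ∈ t, (u n).seq i • z i‖ := norm_add_le _ _
      _ < δ/3 + δ/3 := by
          apply add_lt_add_of_le_of_lt h1 h2
      _ < δ := by linarith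
  -- convergence
  refine ⟨⟨a, hsum⟩, ?_⟩
  rw [Metric.tendsto_atTop]
  intro ε hε
  obtain ⟨n₀, hn₀⟩ := key (ε/2) (by linarith)
  refine ⟨n₀, fun n hn => ?_⟩
  have : dist (u n) ⟨a, hsum⟩ = ‖(⟨a, hsum⟩ : Esp z hz) - u n‖ := by
    rw [dist_eq_norm, ← norm_neg]
    congr 1
    abel
  rw [this]
  have hle : ‖(⟨a, hsum⟩ : Esp z hz) - u n‖ ≤ ε/2 := by
    apply norm_le
    intro F
    have heq : ∑ i ∈ F, ((⟨a, hsum⟩ : Esp z hz) - u n).seq i • z i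
        = ∑ i ∈ F, (a i - (u n).seq i) • z i := by
      apply Finset.sum_congr rfl
      intro i _
      rw [seq_sub]
      rfl
    rw [heq]
    exact hn₀ n hn F
  linarith

variable (z hz) in
/-- The summation map from `Esp` to `B`. -/
noncomputable def Phi [CompleteSpace B] : Esp z hz →L[ℝ] B :=
  LinearMap.mkContinuous
    { toFun := fun a => ∑' i, a.seq i • z i
      map_add' := fun a b => by
        rw [← (a.summable'.hasSum.add b.summable'.hasSum).tsum_eq]
        apply tsum_congr
        intro i
        rw [seq_add]
        simp [add_smul]
      map_smul' := fun r a => by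
        rw [RingHom.id_apply, ← (a.summable'.hasSum.const_smul r).tsum_eq]
        apply tsum_congr
        intro i
        rw [seq_smul]
        simp [smul_smul] }
    1
    (fun a => by
      rw [one_mul]
      exact le_of_tendsto a.summable'.hasSum.norm
        (Filter.Eventually.of_forall fun F => a.norm_finsetSum_le F))

lemma Phi_apply [CompleteSpace B] (a : Esp z hz) : Phi z hz a = ∑' i, a.seq i • z i := rfl

lemma hasSum_phi [CompleteSpace B] (a : Esp z hz) :
    HasSum (fun i => a.seq i • z i) (Phi z hz a) := by
  rw [Phi_apply]
  exact a.summable'.hasSum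

end Esp

end Complete


section Key

variable {B : Type*} [NormedAddCommGroup B] [NormedSpace ℝ B] [CompleteSpace B]

lemma basis_nonzero {z : ℕ → B} (hb : IsSchauderBasis z) : ∀ i, z i ≠ 0 := by
  intro i h0
  obtain ⟨a₀, _, hun⟩ := hb 0
  have h1 : Tendsto (fun N => ∑ j ∈ Finset.range N, (0 : ℝ) • z j) atTop (nhds (0 : B)) := by
    simpa using (tendsto_const_nhds : Tendsto (fun _ : ℕ => (0:B)) atTop (nhds 0))
  have h2 : Tendsto (fun N => ∑ j ∈ Finset.range N,
      (fun j => if j = i then (1:ℝ) else 0) j • z j) atTop (nhds (0 : B)) := by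
    have hz2 : ∀ N, ∑ j ∈ Finset.range N, (fun j => if j = i then (1:ℝ) else 0) j • z j = 0 := by
      intro N
      apply Finset.sum_eq_zero
      intro j _
      by_cases hji : j = i
      · subst hji; rw [h0]; simp
      · simp [hji]
    exact (tendsto_congr hz2).mpr tendsto_const_nhds
  have e1 := hun _ h1
  have e2 := hun _ h2
  have : (fun j => if j = i then (1:ℝ) else 0) = (fun _ => (0:ℝ)) := e2.trans e1.symm
  have := congrFun this i
  simp at this

/-- Existence of the unconditional basis constant and of the coefficient functionals,
via the open mapping theorem applied to `Phi : Esp z hz → B`. -/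
lemma exists_unconditional_constant {z : ℕ → B} (hb : IsSchauderBasis z)
    (hu : IsUnconditional z) :
    ∃ K : ℝ, 1 ≤ K ∧
      (∀ (a : ℕ → ℝ) (S : B), HasSum (fun i => a i • z i) S →
        ∀ F : Finset ℕ, ‖∑ i ∈ F, a i • z i‖ ≤ K * ‖S‖) ∧
      (∃ coef : B → ℕ → ℝ, (∀ y, HasSum (fun i => coef y i • z i) y) ∧
        (∀ x y, coef (x + y) = coef x + coef y) ∧
        (∀ (r : ℝ) (y : B), coef (r • y) = r • coef y) ∧
        (∀ (y : B) (i : ℕ), ‖coef y i • z i‖ ≤ K * ‖y‖)) := by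
  have hz : ∀ i, z i ≠ 0 := basis_nonzero hb
  -- Phi is bijective
  have hinj : Function.Injective (Esp.Phi z hz) := by
    intro A1 A2 hEq
    obtain ⟨a₀, _, hun⟩ := hb (Esp.Phi z hz A1)
    have t1 := (Esp.hasSum_phi A1).tendsto_sum_nat
    have t2 := (Esp.hasSum_phi A2).tendsto_sum_nat
    rw [← hEq] at t2
    have e1 := hun _ t1
    have e2 := hun _ t2
    exact Esp.ext' (e1.trans e2.symm)
  have hsurj : Function.Surjective (Esp.Phi z hz) := by
    intro y
    obtain ⟨a, ha, _⟩ := hb y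
    have hs : HasSum (fun i => a i • z i) y := hu y a ha
    exact ⟨⟨a, hs.summable⟩, hs.tsum_eq⟩
  have hker : LinearMap.ker (Esp.Phi z hz : Esp z hz →ₗ[ℝ] B) = ⊥ := LinearMap.ker_eq_bot.mpr hinj
  have hrange : LinearMap.range (Esp.Phi z hz : Esp z hz →ₗ[ℝ] B) = ⊤ := LinearMap.range_eq_top.mpr hsurj
  let equiv : Esp z hz ≃L[ℝ] B := ContinuousLinearEquiv.ofBijective (Esp.Phi z hz) hker hrange
  set K : ℝ := ‖(equiv.symm : B →L[ℝ] Esp z hz)‖ + 1 with hK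
  have hK1 : 1 ≤ K := le_add_of_nonneg_left (norm_nonneg _)
  have hKA : ∀ A : Esp z hz, ‖A‖ ≤ K * ‖Esp.Phi z hz A‖ := by
    intro A
    have h1 : equiv.symm (Esp.Phi z hz A) = A := by
      have : Esp.Phi z hz A = equiv A := rfl
      rw [this, ContinuousLinearEquiv.symm_apply_apply]
    calc ‖A‖ = ‖equiv.symm (Esp.Phi z hz A)‖ := by rw [h1]
      _ ≤ ‖(equiv.symm : B →L[ℝ] Esp z hz)‖ * ‖Esp.Phi z hz A‖ :=
          (equiv.symm : B →L[ℝ] Esp z hz).le_opNorm _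
      _ ≤ K * ‖Esp.Phi z hz A‖ := by
          apply mul_le_mul_of_nonneg_right _ (norm_nonneg _)
          rw [hK]; linarith
  refine ⟨K, hK1, ?_, ?_⟩
  · intro a S hS F
    set A : Esp z hz := ⟨a, hS.summable⟩ with hA
    have hPhi : Esp.Phi z hz A = S := hS.tsum_eq
    calc ‖∑ i ∈ F, a i • z i‖ = ‖∑ i ∈ F, A.seq i • z i‖ := rfl
      _ ≤ ‖A‖ := A.norm_finsetSum_le F
      _ ≤ K * ‖Esp.Phi z hz A‖ := hKA A
      _ = K * ‖S‖ := by rw [hPhi]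
  · refine ⟨fun y => (equiv.symm y).seq, ?_, ?_, ?_, ?_⟩
    · intro y
      have h1 : Esp.Phi z hz (equiv.symm y) = y := by
        have : ∀ A, Esp.Phi z hz A = equiv A := fun _ => rfl
        rw [this, ContinuousLinearEquiv.apply_symm_apply]
      have := Esp.hasSum_phi (equiv.symm y)
      rwa [h1] at this
    · intro x y
      show (equiv.symm (x + y)).seq = _
      rw [map_add]
      exact Esp.seq_add _ _
    · intro r y
      show (equiv.symm (r • y)).seq = _
      rw [map_smul]
      exact Esp.seq_smul _ _
    · intro y i
      calc ‖(equiv.symm y).seq i • z i‖ ≤ ‖equiv.symm y‖ := Esp.norm_single _ i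
        _ ≤ ‖(equiv.symm : B →L[ℝ] Esp z hz)‖ * ‖y‖ :=
            (equiv.symm : B →L[ℝ] Esp z hz).le_opNorm _
        _ ≤ K * ‖y‖ := by
            apply mul_le_mul_of_nonneg_right _ (norm_nonneg _)
            rw [hK]; linarith

end Key

section C0Helpers

/-- Finitely supported element of `c₀`. -/
noncomputable def indC0 (S : Finset ℕ) (g : ℕ → ℝ) : ZeroAtInftyContinuousMap ℕ ℝ where
  toFun := fun i => if i ∈ S then g i else 0
  continuous_toFun := continuous_of_discreteTopology
  zero_at_infty' := by
    rw [Filter.cocompact_eq_cofinite, Nat.cofinite_eq_atTop]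
    have h : (fun _ : ℕ => (0:ℝ)) =ᶠ[atTop] fun i => if i ∈ S then g i else 0 := by
      filter_upwards [Filter.eventually_gt_atTop (S.sup id)] with i hi
      have : i ∉ S := by
        intro hiS
        exact absurd (Finset.le_sup (f := id) hiS) (not_le.mpr hi)
      simp [this]
    exact Filter.Tendsto.congr' h tendsto_const_nhds

lemma indC0_apply (S : Finset ℕ) (g : ℕ → ℝ) (i : ℕ) :
    indC0 S g i = if i ∈ S then g i else 0 := rfl

lemma c0_coord_le_norm (v : ZeroAtInftyContinuousMap ℕ ℝ) (k : ℕ) : |v k| ≤ ‖v‖ := by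
  rw [← ZeroAtInftyContinuousMap.norm_toBCF_eq_norm]
  exact BoundedContinuousFunction.norm_coe_le_norm v.toBCF k

lemma c0_norm_le (v : ZeroAtInftyContinuousMap ℕ ℝ) {D : ℝ} (hD : 0 ≤ D)
    (h : ∀ k, |v k| ≤ D) : ‖v‖ ≤ D := by
  rw [← ZeroAtInftyContinuousMap.norm_toBCF_eq_norm]
  exact (BoundedContinuousFunction.norm_le hD).mpr h

lemma indC0_norm_le (S : Finset ℕ) (g : ℕ → ℝ) {D : ℝ} (hD : 0 ≤ D)
    (hg : ∀ i ∈ S, |g i| ≤ D) : ‖indC0 S g‖ ≤ D := by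
  apply c0_norm_le _ hD
  intro k
  rw [indC0_apply]
  by_cases h : k ∈ S
  · simpa [h] using hg k h
  · simpa [h] using hD

lemma c0_tendsto (v : ZeroAtInftyContinuousMap ℕ ℝ) : Tendsto ⇑v atTop (nhds 0) := by
  have := ZeroAtInftyContinuousMapClass.zero_at_infty (f := v)
  rwa [Filter.cocompact_eq_cofinite, Nat.cofinite_eq_atTop] at this

lemma indC0_eq_sum (S : Finset ℕ) (g : ℕ → ℝ) :
    indC0 S g = ∑ k ∈ S, g k • indC0 {k} 1 := by
  ext i
  rw [indC0_apply]
  have hsum : ∀ S : Finset ℕ, (∑ k ∈ S, g k • indC0 {k} 1) i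
      = ∑ k ∈ S, g k * (if i ∈ ({k} : Finset ℕ) then (1 : ℕ → ℝ) i else 0) := by
    intro S
    induction S using Finset.cons_induction with
    | empty => simp [ZeroAtInftyContinuousMap.coe_zero]
    | cons k S hk ih =>
      rw [Finset.sum_cons, Finset.sum_cons, ZeroAtInftyContinuousMap.coe_add,
        Pi.add_apply, ih, ZeroAtInftyContinuousMap.coe_smul]
      rfl
  rw [hsum]
  simp only [Finset.mem_singleton, Pi.one_apply, mul_ite, mul_one, mul_zero]
  rw [Finset.sum_ite_eq S i g]
end C0Helpers

section Blocks

variable {B : Type*} [NormedAddCommGroup B] [NormedSpace ℝ B]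

/-- The block multiplier: `cmul p q φ i = φ j` if `i` lies in the `j`-th block, else `0`. -/
def cmul (p q : ℕ → ℕ) (φ : ℕ → ℝ) (i : ℕ) : ℝ :=
  ∑ j ∈ Finset.range (i+1), if i ∈ Finset.Ico (p j) (q j) then φ j else 0

variable {p q : ℕ → ℕ}

lemma pmono (hpq : ∀ j, p j < q j) (hqp : ∀ j, q j ≤ p (j+1)) : StrictMono p :=
  strictMono_nat_of_lt_succ (fun j => lt_of_lt_of_le (hpq j) (hqp j))

lemma cmul_in (hpq : ∀ j, p j < q j) (hqp : ∀ j, q j ≤ p (j+1)) (φ : ℕ → ℝ) {i j : ℕ} (hij : i ∈ Finset.Ico (p j) (q j)) :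
    cmul p q φ i = φ j := by
  have hmono := pmono hpq hqp
  rw [Finset.mem_Ico] at hij
  have hji : j ≤ i := le_trans (hmono.le_apply) hij.1
  rw [cmul]
  rw [Finset.sum_eq_single_of_mem j (Finset.mem_range.mpr (Nat.lt_succ_of_le hji))]
  · rw [if_pos (Finset.mem_Ico.mpr hij)]
  · intro b _ hbj
    rw [if_neg]
    rw [Finset.mem_Ico]
    rcases lt_or_gt_of_ne hbj with h | h
    · -- b < j : q b ≤ p j ≤ i
      intro hc
      have : q b ≤ p j := le_trans (hqp b) (hmono.monotone h)
      omega
    · -- j < b : i < q j ≤ p b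
      intro hc
      have : q j ≤ p b := le_trans (hqp j) (hmono.monotone h)
      omega

lemma cmul_out (φ : ℕ → ℝ) {i : ℕ} (h : ∀ j, i ∉ Finset.Ico (p j) (q j)) :
    cmul p q φ i = 0 := by
  rw [cmul]
  apply Finset.sum_eq_zero
  intro j _
  rw [if_neg (h j)]

lemma cmul_add (φ ψ : ℕ → ℝ) (i : ℕ) :
    cmul p q (φ + ψ) i = cmul p q φ i + cmul p q ψ i := by
  rw [cmul, cmul, cmul, ← Finset.sum_add_distrib]
  apply Finset.sum_congr rfl
  intro j _
  by_cases h : i ∈ Finset.Ico (p j) (q j) <;> simp [h]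

lemma cmul_smul (r : ℝ) (φ : ℕ → ℝ) (i : ℕ) :
    cmul p q (r • φ) i = r * cmul p q φ i := by
  rw [cmul, cmul, Finset.mul_sum]
  apply Finset.sum_congr rfl
  intro j _
  by_cases h : i ∈ Finset.Ico (p j) (q j) <;> simp [h]

lemma cmul_le_glob (hpq : ∀ j, p j < q j) (hqp : ∀ j, q j ≤ p (j+1)) (φ : ℕ → ℝ) {D : ℝ} (hD : 0 ≤ D) (hφ : ∀ j, |φ j| ≤ D) (i : ℕ) :
    |cmul p q φ i| ≤ D := by
  by_cases h : ∃ j, i ∈ Finset.Ico (p j) (q j)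
  · obtain ⟨j, hj⟩ := h
    rw [cmul_in hpq hqp φ hj]
    exact hφ j
  · push_neg at h
    rw [cmul_out φ h]
    simpa using hD

lemma cmul_le_tail (hpq : ∀ j, p j < q j) (hqp : ∀ j, q j ≤ p (j+1)) (φ : ℕ → ℝ) {D : ℝ} (hD : 0 ≤ D) (n : ℕ) (hφ : ∀ j ≥ n, |φ j| ≤ D)
    {i : ℕ} (hi : p n ≤ i) : |cmul p q φ i| ≤ D := by
  by_cases h : ∃ j, i ∈ Finset.Ico (p j) (q j)
  · obtain ⟨j, hj⟩ := h
    rw [cmul_in hpq hqp φ hj]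
    apply hφ
    by_contra hjn
    push_neg at hjn
    have hmono := pmono hpq hqp
    have h1 : q j ≤ p n := le_trans (hqp j) (hmono.monotone hjn)
    rw [Finset.mem_Ico] at hj
    omega
  · push_neg at h
    rw [cmul_out φ h]
    simpa using hD

variable {z : ℕ → B} {a : ℕ → ℝ} {K M : ℝ}

/-- Uniform bound for multiplier-modified finite sums. -/
lemma cmul_bound (hKM : 0 ≤ K * M)
    (hSb : ∀ S : Finset ℕ, ‖∑ i ∈ S, a i • z i‖ ≤ K * M)
    (φ : ℕ → ℝ) {D : ℝ} (hD : 0 ≤ D) (F : Finset ℕ)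
    (hφ : ∀ i ∈ F, |cmul p q φ i| ≤ D) :
    ‖∑ i ∈ F, (cmul p q φ i * a i) • z i‖ ≤ 2 * (K * M * D) := by
  have h : ∑ i ∈ F, (cmul p q φ i * a i) • z i = ∑ i ∈ F, cmul p q φ i • (a i • z i) := by
    apply Finset.sum_congr rfl
    intro i _
    rw [mul_smul]
  rw [h]
  have h2 := norm_sum_smul_le_of_subsets (fun i => a i • z i) F hD
    (fun S _ => hSb S) (cmul p q φ) hφ
  have h3 : (2 : ℝ) * (K * M * D) = 2 * (K * M * D) := rfl
  calc ‖∑ i ∈ F, cmul p q φ i • (a i • z i)‖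
      ≤ 2 * (K * M * D) := by
        have : (2:ℝ) * (K * M * D) = 2 * ((K * M) * D) := by ring
        rw [this]
        exact h2

end Blocks

section Forward

variable {B : Type*} [NormedAddCommGroup B] [NormedSpace ℝ B] [CompleteSpace B]

lemma bseq_summable {z : ℕ → B} {a : ℕ → ℝ} {p q : ℕ → ℕ} {K M : ℝ}
    (hpq : ∀ j, p j < q j) (hqp : ∀ j, q j ≤ p (j+1)) (hKM : 0 ≤ K * M)
    (hSb : ∀ S : Finset ℕ, ‖∑ i ∈ S, a i • z i‖ ≤ K * M)
    (φ : ℕ → ℝ) (hφ0 : Tendsto φ atTop (nhds 0)) :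
    Summable fun i => (cmul p q φ i * a i) • z i := by
  rw [summable_iff_vanishing]
  intro e he
  obtain ⟨δ, hδ, hball⟩ := Metric.mem_nhds_iff.mp he
  set δ' : ℝ := δ / (2 * (K * M) + 2) with hδ'def
  have hδ'pos : 0 < δ' := div_pos hδ (by linarith)
  obtain ⟨n, hn⟩ := (Metric.tendsto_atTop.mp hφ0) δ' hδ'pos
  refine ⟨Finset.range (p n), fun t ht => ?_⟩
  apply hball
  simp only [Metric.mem_ball, dist_eq_norm, sub_zero]
  have hφn : ∀ j ≥ n, |φ j| ≤ δ' := by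
    intro j hj
    have := hn j hj
    rw [Real.dist_eq, sub_zero] at this
    exact le_of_lt this
  have hc : ∀ i ∈ t, |cmul p q φ i| ≤ δ' := by
    intro i hi
    apply cmul_le_tail hpq hqp φ (le_of_lt hδ'pos) n hφn
    by_contra hlt
    push_neg at hlt
    exact (Finset.disjoint_left.mp ht) hi (Finset.mem_range.mpr hlt)
  calc ‖∑ i ∈ t, (cmul p q φ i * a i) • z i‖ ≤ 2 * (K * M * δ') :=
        cmul_bound hKM hSb φ (le_of_lt hδ'pos) t hc
    _ < δ := by
        rw [hδ'def]
        have h2 : (0:ℝ) < 2 * (K * M) + 2 := by linarith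
        have h3 : 2 * (K * M * (δ / (2 * (K * M) + 2))) = δ * (2 * (K * M)) / (2 * (K * M) + 2) := by
          ring
        rw [h3, div_lt_iff₀ h2]
        nlinarith [hδ]

lemma forward_direction {z : ℕ → B} (hb : IsSchauderBasis z) (hu : IsUnconditional z)
    (hnbc : ¬ BoundedlyComplete z) :
    ∃ (T : ZeroAtInftyContinuousMap ℕ ℝ →L[ℝ] B) (c : ℝ), 0 < c ∧
      ∀ v, c * ‖v‖ ≤ ‖T v‖ := by
  obtain ⟨K, hK1, hKey, -⟩ := exists_unconditional_constant hb hu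
  have hK0 : (0:ℝ) < K := lt_of_lt_of_le zero_lt_one hK1
  rw [BoundedlyComplete] at hnbc
  push_neg at hnbc
  obtain ⟨a, hbound, hdiv⟩ := hnbc
  obtain ⟨M, hM⟩ := hbound
  have hM0 : 0 ≤ M := by simpa using hM 0
  have hKM : 0 ≤ K * M := mul_nonneg (le_of_lt hK0) hM0
  -- all finite subset sums are bounded by K * M
  have hSb : ∀ S : Finset ℕ, ‖∑ i ∈ S, a i • z i‖ ≤ K * M := by
    intro S
    set N : ℕ := (S.sup id) + 1 with hN
    have hSN : S ⊆ Finset.range N := by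
      intro i hi
      rw [Finset.mem_range, hN]
      exact Nat.lt_succ_of_le (Finset.le_sup (f := id) hi)
    set a1 : ℕ → ℝ := fun i => if i ∈ Finset.range N then a i else 0 with ha1
    have hhs : HasSum (fun i => a1 i • z i) (∑ i ∈ Finset.range N, a1 i • z i) := by
      apply hasSum_sum_of_ne_finset_zero
      intro i hi
      rw [ha1]
      simp [hi]
    have h1 : ∑ i ∈ Finset.range N, a1 i • z i = ∑ i ∈ Finset.range N, a i • z i := by
      apply Finset.sum_congr rfl
      intro i hi
      rw [ha1]
      simp [hi]
    have h2 := hKey a1 _ hhs S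
    have h3 : ∑ i ∈ S, a1 i • z i = ∑ i ∈ S, a i • z i := by
      apply Finset.sum_congr rfl
      intro i hi
      rw [ha1]
      simp [hSN hi]
    rw [h3, h1] at h2
    calc ‖∑ i ∈ S, a i • z i‖ ≤ K * ‖∑ i ∈ Finset.range N, a i • z i‖ := h2
      _ ≤ K * M := mul_le_mul_of_nonneg_left (hM N) (le_of_lt hK0)
  -- the partial sums are not Cauchy
  have hnc : ¬ CauchySeq (fun N => ∑ i ∈ Finset.range N, a i • z i) := by
    intro h
    obtain ⟨y, hy⟩ := cauchySeq_tendsto_of_complete h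
    exact hdiv y hy
  rw [Metric.cauchySeq_iff] at hnc
  push_neg at hnc
  obtain ⟨ε, hε, hstep⟩ := hnc
  -- extract blocks
  have step : ∀ N, ∃ pq : ℕ × ℕ, N ≤ pq.1 ∧ pq.1 < pq.2 ∧
      ε ≤ ‖∑ i ∈ Finset.Ico pq.1 pq.2, a i • z i‖ := by
    intro N
    obtain ⟨m, hm, n, hn, hd⟩ := hstep N
    have hmn : m ≠ n := by
      intro h
      rw [h] at hd
      simp at hd
      linarith
    have hico : ∀ m n : ℕ, m < n → ∑ i ∈ Finset.Ico m n, a i • z i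
        = ∑ i ∈ Finset.range n, a i • z i - ∑ i ∈ Finset.range m, a i • z i := by
      intro m n h
      rw [Finset.sum_Ico_eq_sub _ (le_of_lt h)]
    rcases lt_or_gt_of_ne hmn with h | h
    · refine ⟨(m, n), hm, h, ?_⟩
      rw [hico m n h]
      calc ε ≤ dist (∑ i ∈ Finset.range m, a i • z i) (∑ i ∈ Finset.range n, a i • z i) := hd
        _ = ‖∑ i ∈ Finset.range n, a i • z i - ∑ i ∈ Finset.range m, a i • z i‖ := by
            rw [dist_eq_norm, norm_sub_rev]
    · refine ⟨(n, m), hn, h, ?_⟩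
      rw [hico n m h]
      calc ε ≤ dist (∑ i ∈ Finset.range m, a i • z i) (∑ i ∈ Finset.range n, a i • z i) := hd
        _ = ‖∑ i ∈ Finset.range m, a i • z i - ∑ i ∈ Finset.range n, a i • z i‖ := by
            rw [dist_eq_norm]
  choose f hf1 hf2 hf3 using step
  set g : ℕ → ℕ × ℕ := fun j => Nat.rec (f 0) (fun _ prev => f prev.2) j with hg
  set p : ℕ → ℕ := fun j => (g j).1 with hp
  set q : ℕ → ℕ := fun j => (g j).2 with hq
  have hgf : ∀ j, ∃ N, g j = f N := by
    intro j
    induction j with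
    | zero => exact ⟨0, rfl⟩
    | succ j _ => exact ⟨(g j).2, rfl⟩
  have hpq : ∀ j, p j < q j := by
    intro j
    obtain ⟨N, hN⟩ := hgf j
    change (g j).1 < (g j).2
    rw [hN]
    exact hf2 N
  have hqp : ∀ j, q j ≤ p (j+1) := by
    intro j
    have hgj : g (j+1) = f (g j).2 := rfl
    change (g j).2 ≤ (g (j+1)).1
    rw [hgj]
    exact hf1 (g j).2
  have hblock : ∀ j, ε ≤ ‖∑ i ∈ Finset.Ico (p j) (q j), a i • z i‖ := by
    intro j
    obtain ⟨N, hN⟩ := hgf j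
    change ε ≤ ‖∑ i ∈ Finset.Ico (g j).1 (g j).2, a i • z i‖
    rw [hN]
    exact hf3 N
  -- summability for each c₀ element
  have hsummv : ∀ v : ZeroAtInftyContinuousMap ℕ ℝ,
      Summable fun i => (cmul p q ⇑v i * a i) • z i :=
    fun v => bseq_summable hpq hqp hKM hSb ⇑v (c0_tendsto v)
  -- the linear map
  set Tlin : ZeroAtInftyContinuousMap ℕ ℝ →ₗ[ℝ] B :=
    { toFun := fun v => ∑' i, (cmul p q ⇑v i * a i) • z i
      map_add' := fun v w => by
        have hco : ⇑(v + w) = ⇑v + ⇑w := ZeroAtInftyContinuousMap.coe_add v w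
        have h1 : ∀ i, (cmul p q ⇑(v + w) i * a i) • z i
            = (cmul p q ⇑v i * a i) • z i + (cmul p q ⇑w i * a i) • z i := by
          intro i
          rw [hco, cmul_add, add_mul, add_smul]
        show (∑' i, (cmul p q ⇑(v + w) i * a i) • z i)
            = (∑' i, (cmul p q ⇑v i * a i) • z i) + ∑' i, (cmul p q ⇑w i * a i) • z i
        rw [tsum_congr h1]
        exact Summable.tsum_add (hsummv v) (hsummv w)
      map_smul' := fun r v => by
        have hco : ⇑(r • v) = r • ⇑v := ZeroAtInftyContinuousMap.coe_smul r v
        have h1 : ∀ i, (cmul p q ⇑(r • v) i * a i) • z i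
            = r • ((cmul p q ⇑v i * a i) • z i) := by
          intro i
          rw [hco, cmul_smul, mul_assoc, mul_smul]
        show (∑' i, (cmul p q ⇑(r • v) i * a i) • z i)
            = r • ∑' i, (cmul p q ⇑v i * a i) • z i
        rw [tsum_congr h1]
        exact ((hsummv v).hasSum.const_smul r).tsum_eq } with hTlin
  have hTlin_apply : ∀ v, Tlin v = ∑' i, (cmul p q ⇑v i * a i) • z i := fun v => rfl
  -- continuity bound
  have hTbound : ∀ v, ‖Tlin v‖ ≤ (2 * (K * M)) * ‖v‖ := by
    intro v
    rw [hTlin_apply]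
    have hHS := (hsummv v).hasSum
    apply le_of_tendsto hHS.norm
    apply Filter.Eventually.of_forall
    intro F
    have := cmul_bound (p := p) (q := q) hKM hSb ⇑v (norm_nonneg v) F
      (fun i _ => cmul_le_glob hpq hqp ⇑v (norm_nonneg v) (fun k => c0_coord_le_norm v k) i)
    calc ‖∑ i ∈ F, (cmul p q ⇑v i * a i) • z i‖ ≤ 2 * (K * M * ‖v‖) := this
      _ = (2 * (K * M)) * ‖v‖ := by ring
  set T : ZeroAtInftyContinuousMap ℕ ℝ →L[ℝ] B :=
    LinearMap.mkContinuous Tlin (2 * (K * M)) hTbound with hT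
  have hT_apply : ∀ v, T v = ∑' i, (cmul p q ⇑v i * a i) • z i := fun v => rfl
  -- lower bound
  refine ⟨T, ε / K, div_pos hε hK0, ?_⟩
  intro v
  have hcoord : ∀ j, ε * |v j| ≤ K * ‖T v‖ := by
    intro j
    have hHS : HasSum (fun i => (cmul p q ⇑v i * a i) • z i) (T v) := by
      rw [hT_apply]
      exact (hsummv v).hasSum
    have h1 := hKey _ _ hHS (Finset.Ico (p j) (q j))
    have h2 : ∑ i ∈ Finset.Ico (p j) (q j), (cmul p q ⇑v i * a i) • z i
        = v j • ∑ i ∈ Finset.Ico (p j) (q j), a i • z i := by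
      rw [Finset.smul_sum]
      apply Finset.sum_congr rfl
      intro i hi
      rw [cmul_in hpq hqp ⇑v hi, mul_smul]
    rw [h2] at h1
    rw [norm_smul, Real.norm_eq_abs] at h1
    calc ε * |v j| = |v j| * ε := mul_comm _ _
      _ ≤ |v j| * ‖∑ i ∈ Finset.Ico (p j) (q j), a i • z i‖ :=
          mul_le_mul_of_nonneg_left (hblock j) (abs_nonneg _)
      _ ≤ K * ‖T v‖ := h1
  have hnorm : ‖v‖ ≤ K * ‖T v‖ / ε := by
    apply c0_norm_le
    · positivity
    · intro k
      rw [le_div_iff₀ hε]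
      calc |v k| * ε = ε * |v k| := mul_comm _ _
        _ ≤ K * ‖T v‖ := hcoord k
  rw [div_mul_eq_mul_div, div_le_iff₀ hK0]
  rw [le_div_iff₀ hε] at hnorm
  nlinarith [hnorm, norm_nonneg (T v)]

end Forward

section BFun

/-- Coefficients glued along a partition of `ℕ` into consecutive blocks `[p j, p (j+1))`. -/
def bfun (p : ℕ → ℕ) (ψ : ℕ → ℕ → ℝ) (i : ℕ) : ℝ :=
  ∑ j ∈ Finset.range (i+1), if i ∈ Finset.Ico (p j) (p (j+1)) then ψ j i else 0

lemma bfun_in {p : ℕ → ℕ} (hp : StrictMono p) (ψ : ℕ → ℕ → ℝ) {i j : ℕ}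
    (hij : i ∈ Finset.Ico (p j) (p (j+1))) : bfun p ψ i = ψ j i := by
  rw [Finset.mem_Ico] at hij
  have hji : j ≤ i := le_trans hp.le_apply hij.1
  rw [bfun, Finset.sum_eq_single_of_mem j (Finset.mem_range.mpr (Nat.lt_succ_of_le hji))]
  · rw [if_pos (Finset.mem_Ico.mpr hij)]
  · intro b _ hbj
    rw [if_neg]
    rw [Finset.mem_Ico]
    rcases lt_or_gt_of_ne hbj with h | h
    · intro hc
      have : p (b+1) ≤ p j := hp.monotone h
      omega
    · intro hc
      have : p (j+1) ≤ p b := hp.monotone h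
      omega

lemma exists_block {p : ℕ → ℕ} (hp : StrictMono p) (hp0 : p 0 = 0) (i : ℕ) :
    ∃ j, i ∈ Finset.Ico (p j) (p (j+1)) := by
  set j := Nat.findGreatest (fun j => p j ≤ i) (i+1) with hj
  have hP0 : p 0 ≤ i := by rw [hp0]; exact Nat.zero_le i
  have hspec : p j ≤ i :=
    Nat.findGreatest_spec (P := fun j => p j ≤ i) (Nat.zero_le (i+1)) hP0
  refine ⟨j, Finset.mem_Ico.mpr ⟨hspec, ?_⟩⟩
  by_cases hcase : j + 1 ≤ i + 1
  · have hgr := Nat.findGreatest_is_greatest (P := fun j => p j ≤ i)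
      (Nat.lt_succ_self j) hcase
    have hgr' : ¬ p (j+1) ≤ i := by simpa using hgr
    omega
  · exfalso
    have h1 : i + 1 ≤ j := by omega
    have h2 : j ≤ p j := hp.le_apply
    omega

end BFun

section Backward

variable {B : Type*} [NormedAddCommGroup B] [NormedSpace ℝ B] [CompleteSpace B]

lemma backward_direction {z : ℕ → B} (hb : IsSchauderBasis z) (hu : IsUnconditional z)
    (T : ZeroAtInftyContinuousMap ℕ ℝ →L[ℝ] B) (c : ℝ) (hc : 0 < c)
    (hlow : ∀ v, c * ‖v‖ ≤ ‖T v‖) : ¬ BoundedlyComplete z := by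
  intro hbc
  obtain ⟨K, hK1, hKey, coef, hcoefSum, hcoefAdd, hcoefSmul, hcoefBound⟩ :=
    exists_unconditional_constant hb hu
  have hK0 : (0:ℝ) < K := lt_of_lt_of_le zero_lt_one hK1
  have hz : ∀ i, z i ≠ 0 := basis_nonzero hb
  have hzpos : ∀ i, (0:ℝ) < ‖z i‖ := fun i => norm_pos_iff.mpr (hz i)
  -- the images of the unit vectors
  set e : ℕ → ZeroAtInftyContinuousMap ℕ ℝ := fun k => indC0 {k} 1 with he
  have hek : ∀ k, ‖e k‖ = 1 := by
    intro k
    apply le_antisymm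
    · apply indC0_norm_le _ _ zero_le_one
      intro i _
      simp
    · have h1 : e k k = 1 := by
        rw [he, indC0_apply]
        simp
      have := c0_coord_le_norm (e k) k
      rw [h1] at this
      simpa using this
  set x : ℕ → B := fun k => T (e k) with hx
  have hxlow : ∀ k, c ≤ ‖x k‖ := by
    intro k
    have := hlow (e k)
    rwa [hek k, mul_one] at this
  have hxup : ∀ k, ‖x k‖ ≤ ‖T‖ := by
    intro k
    calc ‖x k‖ = ‖T (e k)‖ := rfl
      _ ≤ ‖T‖ * ‖e k‖ := T.le_opNorm _
      _ = ‖T‖ := by rw [hek k, mul_one]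
  have hT0 : (0:ℝ) ≤ ‖T‖ := norm_nonneg T
  -- coef of finite linear combinations
  have hcoef0 : coef 0 = 0 := by
    have h1 : ((0:ℝ) • (0:B)) = 0 := by simp
    have := hcoefSmul 0 0
    rw [h1] at this
    rw [this]
    funext i
    simp
  have hcoefFin : ∀ (G : Finset ℕ) (wgt : ℕ → ℝ) (ξ : ℕ → B) (i : ℕ),
      coef (∑ k ∈ G, wgt k • ξ k) i = ∑ k ∈ G, wgt k * coef (ξ k) i := by
    intro G wgt ξ i
    induction G using Finset.cons_induction with
    | empty => simp [hcoef0]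
    | cons k G hk ih =>
      rw [Finset.sum_cons, Finset.sum_cons, hcoefAdd, hcoefSmul]
      simp only [Pi.add_apply, Pi.smul_apply, smul_eq_mul]
      rw [ih]
  -- T applied to finitely supported elements
  have hTind : ∀ (S : Finset ℕ) (g : ℕ → ℝ), T (indC0 S g) = ∑ k ∈ S, g k • x k := by
    intro S g
    rw [indC0_eq_sum, map_sum]
    apply Finset.sum_congr rfl
    intro k _
    rw [map_smul]
  -- absolute summability of the coefficient columns
  have habs : ∀ (i : ℕ) (G : Finset ℕ),
      (∑ k ∈ G, |coef (x k) i|) * ‖z i‖ ≤ K * ‖T‖ := by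
    intro i G
    set σ : ℕ → ℝ := fun k => if 0 ≤ coef (x k) i then 1 else -1 with hσ
    set s := indC0 G σ with hs
    have hsnorm : ‖s‖ ≤ 1 := by
      apply indC0_norm_le _ _ zero_le_one
      intro k _
      show |if 0 ≤ coef (x k) i then (1:ℝ) else -1| ≤ 1
      by_cases h : 0 ≤ coef (x k) i <;> simp [h]
    have hcoefTs : coef (T s) i = ∑ k ∈ G, |coef (x k) i| := by
      rw [hs, hTind G σ, hcoefFin]
      apply Finset.sum_congr rfl
      intro k _
      show (if 0 ≤ coef (x k) i then (1:ℝ) else -1) * coef (x k) i = |coef (x k) i|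
      by_cases h : 0 ≤ coef (x k) i
      · rw [if_pos h, one_mul, abs_of_nonneg h]
      · rw [if_neg h, abs_of_neg (not_le.mp h)]
        ring
    have h1 : ‖coef (T s) i • z i‖ ≤ K * ‖T s‖ := hcoefBound (T s) i
    have h2 : ‖T s‖ ≤ ‖T‖ := by
      calc ‖T s‖ ≤ ‖T‖ * ‖s‖ := T.le_opNorm _
        _ ≤ ‖T‖ * 1 := mul_le_mul_of_nonneg_left hsnorm hT0
        _ = ‖T‖ := mul_one _
    have h3 : ‖coef (T s) i • z i‖ = (∑ k ∈ G, |coef (x k) i|) * ‖z i‖ := by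
      rw [norm_smul, Real.norm_eq_abs, hcoefTs, abs_of_nonneg]
      exact Finset.sum_nonneg (fun k _ => abs_nonneg _)
    calc (∑ k ∈ G, |coef (x k) i|) * ‖z i‖ = ‖coef (T s) i • z i‖ := h3.symm
      _ ≤ K * ‖T s‖ := h1
      _ ≤ K * ‖T‖ := mul_le_mul_of_nonneg_left h2 (le_of_lt hK0)
  have hsummi : ∀ i, Summable fun k => |coef (x k) i| := by
    intro i
    apply summable_of_sum_range_le (c := K * ‖T‖ / ‖z i‖) (fun k => abs_nonneg _)
    intro n
    rw [le_div_iff₀ (hzpos i)]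
    exact habs i (Finset.range n)
  have htend0 : ∀ i, Tendsto (fun k => coef (x k) i) atTop (nhds 0) := by
    intro i
    have h1 := (hsummi i).tendsto_atTop_zero
    exact (tendsto_zero_iff_abs_tendsto_zero (fun k => coef (x k) i)).mpr h1
  -- the gliding hump
  set η : ℕ → ℝ := fun j => c / 2 ^ (j + 4) with hη
  have hηpos : ∀ j, 0 < η j := fun j => by positivity
  have hstepEx : ∀ (N kprev j : ℕ), ∃ k, k > kprev ∧ ∃ N', N' > N ∧
      ‖∑ i ∈ Finset.range N, coef (x k) i • z i‖ < η j ∧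
      ‖x k - ∑ i ∈ Finset.range N', coef (x k) i • z i‖ < η j := by
    intro N kprev j
    have h1 : Tendsto (fun k => ∑ i ∈ Finset.range N, coef (x k) i • z i) atTop
        (nhds 0) := by
      have : Tendsto (fun k => ∑ i ∈ Finset.range N, coef (x k) i • z i) atTop
          (nhds (∑ i ∈ Finset.range N, (0:ℝ) • z i)) := by
        apply tendsto_finset_sum
        intro i _
        exact (htend0 i).smul_const (z i)
      simpa using this
    have h2 : ∀ᶠ k in atTop, ‖∑ i ∈ Finset.range N, coef (x k) i • z i‖ < η j := by
      have := NormedAddCommGroup.tendsto_nhds_zero.mp h1 (η j) (hηpos j)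
      exact this
    obtain ⟨k, hk1, hk2⟩ := (h2.and (Filter.eventually_gt_atTop kprev)).exists
    refine ⟨k, hk2, ?_⟩
    have h3 : Tendsto (fun N' => ∑ i ∈ Finset.range N', coef (x k) i • z i) atTop
        (nhds (x k)) := (hcoefSum (x k)).tendsto_sum_nat
    obtain ⟨N₀, hN₀⟩ := Metric.tendsto_atTop.mp h3 (η j) (hηpos j)
    refine ⟨max N₀ (N+1), by omega, hk1, ?_⟩
    have := hN₀ (max N₀ (N+1)) (le_max_left _ _)
    rw [dist_eq_norm, norm_sub_rev] at this
    exact this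
  choose kf hkf Nf hNf hA hB using hstepEx
  obtain ⟨P, hP0, hPs⟩ : ∃ P : ℕ → ℕ × ℕ, P 0 = (0, 0) ∧
      ∀ j, P (j+1) = (kf (P j).2 (P j).1 (j+1), Nf (P j).2 (P j).1 (j+1)) :=
    ⟨fun j => Nat.rec ((0:ℕ), (0:ℕ))
      (fun j' prev => (kf prev.2 prev.1 (j'+1), Nf prev.2 prev.1 (j'+1))) j, rfl,
      fun j => rfl⟩
  set kk : ℕ → ℕ := fun j => (P j).1 with hkk
  set NN : ℕ → ℕ := fun j => (P j).2 with hNN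
  have hNN0 : NN 0 = 0 := by
    show (P 0).2 = 0
    rw [hP0]
  have hkk1 : ∀ j, kk (j+1) = kf (NN j) (kk j) (j+1) := by
    intro j
    change (P (j+1)).1 = _
    rw [hPs j]
  have hNN1 : ∀ j, NN (j+1) = Nf (NN j) (kk j) (j+1) := by
    intro j
    change (P (j+1)).2 = _
    rw [hPs j]
  have hNNsucc : ∀ j, NN j < NN (j+1) := by
    intro j
    rw [hNN1 j]
    exact hNf (NN j) (kk j) (j+1)
  have hkksucc : ∀ j, kk j < kk (j+1) := by
    intro j
    rw [hkk1 j]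
    exact hkf (NN j) (kk j) (j+1)
  have hNNmono : StrictMono NN := strictMono_nat_of_lt_succ hNNsucc
  have hkkmono : StrictMono kk := strictMono_nat_of_lt_succ hkksucc
  have hsmall : ∀ j, ‖∑ i ∈ Finset.range (NN j), coef (x (kk (j+1))) i • z i‖ < η (j+1) := by
    intro j
    have := hA (NN j) (kk j) (j+1)
    rw [← hkk1 j] at this
    exact this
  have htail : ∀ j, ‖x (kk (j+1))
      - ∑ i ∈ Finset.range (NN (j+1)), coef (x (kk (j+1))) i • z i‖ < η (j+1) := by
    intro j
    have := hB (NN j) (kk j) (j+1)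
    rw [← hkk1 j, ← hNN1 j] at this
    exact this
  -- the blocks
  set v : ℕ → B := fun j =>
    ∑ i ∈ Finset.Ico (NN j) (NN (j+1)), coef (x (kk (j+1))) i • z i with hv
  have hvIco : ∀ j, v j = (∑ i ∈ Finset.range (NN (j+1)), coef (x (kk (j+1))) i • z i)
      - ∑ i ∈ Finset.range (NN j), coef (x (kk (j+1))) i • z i := by
    intro j
    rw [hv]
    exact Finset.sum_Ico_eq_sub _ (le_of_lt (hNNsucc j))
  have hvx : ∀ j, ‖v j - x (kk (j+1))‖ < 2 * η (j+1) := by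
    intro j
    have h1 : v j - x (kk (j+1))
        = -(x (kk (j+1)) - ∑ i ∈ Finset.range (NN (j+1)), coef (x (kk (j+1))) i • z i)
          - ∑ i ∈ Finset.range (NN j), coef (x (kk (j+1))) i • z i := by
      rw [hvIco j]
      abel
    rw [h1]
    calc ‖_ - _‖ ≤ ‖-(x (kk (j+1)) - ∑ i ∈ Finset.range (NN (j+1)), coef (x (kk (j+1))) i • z i)‖
          + ‖∑ i ∈ Finset.range (NN j), coef (x (kk (j+1))) i • z i‖ := norm_sub_le _ _
      _ < η (j+1) + η (j+1) := by
          rw [norm_neg]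
          exact add_lt_add (htail j) (hsmall j)
      _ = 2 * η (j+1) := by ring
  have hvnorm : ∀ j, c - 2 * η (j+1) ≤ ‖v j‖ := by
    intro j
    have h1 := hxlow (kk (j+1))
    have h2 := hvx j
    have h3 : ‖x (kk (j+1))‖ - ‖v j‖ ≤ ‖v j - x (kk (j+1))‖ := by
      rw [norm_sub_rev]
      exact le_trans (le_abs_self _) (abs_norm_sub_norm_le _ _)
    linarith
  -- the glued coefficient sequence
  set b : ℕ → ℝ := bfun NN (fun j i => coef (x (kk (j+1))) i) with hbdef
  have hbin : ∀ {i j : ℕ}, i ∈ Finset.Ico (NN j) (NN (j+1)) → b i = coef (x (kk (j+1))) i :=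
    fun {i j} hij => bfun_in hNNmono _ hij
  -- partial sums of b are bounded
  have hgeom : ∀ J : ℕ, ∑ j ∈ Finset.range J, 2 * η (j+1) ≤ c / 4 := by
    intro J
    have h1 : ∀ j, 2 * η (j+1) = (c/16) * (1/2)^j := by
      intro j
      show 2 * (c / 2 ^ (j + 1 + 4)) = (c/16) * (1/2)^j
      have : (2:ℝ) ^ (j + 1 + 4) = 32 * 2 ^ j := by
        rw [pow_add]
        ring
      rw [this]
      field_simp
      rw [mul_assoc, ← mul_pow]; norm_num
    calc ∑ j ∈ Finset.range J, 2 * η (j+1) = (c/16) * ∑ j ∈ Finset.range J, (1/2:ℝ)^j := by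
          rw [Finset.mul_sum]
          exact Finset.sum_congr rfl (fun j _ => h1 j)
      _ ≤ (c/16) * 2 := by
          apply mul_le_mul_of_nonneg_left (sum_geometric_two_le J) (by positivity)
      _ ≤ c / 4 := by linarith
  have hpartA : ∀ J, ∑ i ∈ Finset.range (NN J), b i • z i = ∑ j ∈ Finset.range J, v j := by
    intro J
    induction J with
    | zero => rw [hNN0]; simp
    | succ J ih =>
      have hsub := Finset.sum_Ico_eq_sub (fun i => b i • z i)
        (le_of_lt (hNNsucc J))
      have hIco : ∑ i ∈ Finset.Ico (NN J) (NN (J+1)), b i • z i = v J := by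
        rw [hv]
        apply Finset.sum_congr rfl
        intro i hi
        rw [hbin hi]
      rw [Finset.sum_range_succ, ← ih, ← hIco]
      rw [hsub]
      abel
  have hsumblocks : ∀ J, ‖∑ j ∈ Finset.range J, v j‖ ≤ ‖T‖ + c / 4 := by
    intro J
    have hsplit : ∑ j ∈ Finset.range J, v j
        = (∑ j ∈ Finset.range J, (v j - x (kk (j+1)))) + ∑ j ∈ Finset.range J, x (kk (j+1)) := by
      rw [← Finset.sum_add_distrib]
      apply Finset.sum_congr rfl
      intro j _
      abel
    have h1 : ‖∑ j ∈ Finset.range J, (v j - x (kk (j+1)))‖ ≤ c / 4 := by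
      calc ‖∑ j ∈ Finset.range J, (v j - x (kk (j+1)))‖
          ≤ ∑ j ∈ Finset.range J, ‖v j - x (kk (j+1))‖ := norm_sum_le _ _
        _ ≤ ∑ j ∈ Finset.range J, 2 * η (j+1) :=
            Finset.sum_le_sum (fun j _ => le_of_lt (hvx j))
        _ ≤ c / 4 := hgeom J
    have h2 : ‖∑ j ∈ Finset.range J, x (kk (j+1))‖ ≤ ‖T‖ := by
      set S : Finset ℕ := (Finset.range J).image (fun j => kk (j+1)) with hS
      have hinj : ∀ j₁ ∈ Finset.range J, ∀ j₂ ∈ Finset.range J,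
          kk (j₁+1) = kk (j₂+1) → j₁ = j₂ := by
        intro j₁ _ j₂ _ h
        have := hkkmono.injective h
        omega
      have himg : ∑ k ∈ S, (1:ℝ) • x k = ∑ j ∈ Finset.range J, x (kk (j+1)) := by
        rw [hS, Finset.sum_image hinj]
        apply Finset.sum_congr rfl
        intro j _
        rw [one_smul]
      have hTS : T (indC0 S 1) = ∑ j ∈ Finset.range J, x (kk (j+1)) := by
        rw [hTind S 1, ← himg]
        rfl
      rw [← hTS]
      calc ‖T (indC0 S 1)‖ ≤ ‖T‖ * ‖indC0 S 1‖ := T.le_opNorm _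
        _ ≤ ‖T‖ * 1 := by
            apply mul_le_mul_of_nonneg_left _ hT0
            apply indC0_norm_le _ _ zero_le_one
            intro i _
            simp
        _ = ‖T‖ := mul_one _
    rw [hsplit]
    calc ‖_ + _‖ ≤ ‖∑ j ∈ Finset.range J, (v j - x (kk (j+1)))‖
          + ‖∑ j ∈ Finset.range J, x (kk (j+1))‖ := norm_add_le _ _
      _ ≤ c/4 + ‖T‖ := add_le_add h1 h2
      _ = ‖T‖ + c/4 := by ring
  have hbbound : ∀ N, ‖∑ i ∈ Finset.range N, b i • z i‖ ≤ (‖T‖ + c/4) + K * ‖T‖ := by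
    intro N
    obtain ⟨J, hJ⟩ := exists_block hNNmono hNN0 N
    rw [Finset.mem_Ico] at hJ
    have hsub := Finset.sum_Ico_eq_sub (fun i => b i • z i) hJ.1
    have hsplit : ∑ i ∈ Finset.range N, b i • z i
        = ∑ i ∈ Finset.range (NN J), b i • z i + ∑ i ∈ Finset.Ico (NN J) N, b i • z i := by
      rw [hsub]
      abel
    have h1 : ‖∑ i ∈ Finset.range (NN J), b i • z i‖ ≤ ‖T‖ + c/4 := by
      rw [hpartA J]
      exact hsumblocks J
    have h2 : ‖∑ i ∈ Finset.Ico (NN J) N, b i • z i‖ ≤ K * ‖T‖ := by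
      have hcongr : ∑ i ∈ Finset.Ico (NN J) N, b i • z i
          = ∑ i ∈ Finset.Ico (NN J) N, coef (x (kk (J+1))) i • z i := by
        apply Finset.sum_congr rfl
        intro i hi
        rw [Finset.mem_Ico] at hi
        have : i ∈ Finset.Ico (NN J) (NN (J+1)) := by
          rw [Finset.mem_Ico]
          omega
        rw [hbin this]
      rw [hcongr]
      calc ‖∑ i ∈ Finset.Ico (NN J) N, coef (x (kk (J+1))) i • z i‖
          ≤ K * ‖x (kk (J+1))‖ := hKey _ _ (hcoefSum _) _
        _ ≤ K * ‖T‖ := mul_le_mul_of_nonneg_left (hxup _) (le_of_lt hK0)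
    rw [hsplit]
    calc ‖_ + _‖ ≤ ‖∑ i ∈ Finset.range (NN J), b i • z i‖
          + ‖∑ i ∈ Finset.Ico (NN J) N, b i • z i‖ := norm_add_le _ _
      _ ≤ (‖T‖ + c/4) + K * ‖T‖ := add_le_add h1 h2
  -- apply bounded completeness and unconditionality
  obtain ⟨y, hy⟩ := hbc b ⟨(‖T‖ + c/4) + K * ‖T‖, hbbound⟩
  have hHS : HasSum (fun i => b i • z i) y := hu y b hy
  obtain ⟨s, hs⟩ := summable_iff_vanishing.mp hHS.summable
    (Metric.ball 0 (c/2)) (Metric.ball_mem_nhds 0 (by linarith))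
  -- find a block beyond s
  set j : ℕ := (s.sup id) + 1 with hjdef
  have hdisj : Disjoint (Finset.Ico (NN j) (NN (j+1))) s := by
    rw [Finset.disjoint_left]
    intro i hi his
    rw [Finset.mem_Ico] at hi
    have h1 : i ≤ s.sup id := Finset.le_sup (f := id) his
    have h2 : j ≤ NN j := hNNmono.le_apply
    omega
  have hvj := hs (Finset.Ico (NN j) (NN (j+1))) hdisj
  rw [Metric.mem_ball, dist_eq_norm, sub_zero] at hvj
  have hveq : ∑ i ∈ Finset.Ico (NN j) (NN (j+1)), b i • z i = v j := by
    rw [hv]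
    apply Finset.sum_congr rfl
    intro i hi
    rw [hbin hi]
  rw [hveq] at hvj
  -- contradiction
  have h1 := hvnorm j
  have h2 : 2 * η (j+1) ≤ c / 8 := by
    show 2 * (c / 2 ^ (j+1+4)) ≤ c / 8
    have hD : (32:ℝ) ≤ 2 ^ (j+1+4) := by
      calc (32:ℝ) = 2^5 := by norm_num
        _ ≤ 2^(j+1+4) := by
          apply pow_le_pow_right₀ (by norm_num : (1:ℝ) ≤ 2)
          omega
    have hpos : (0:ℝ) < 2 ^ (j+1+4) := by positivity
    have heq : 2 * (c / 2 ^ (j+1+4)) = (2*c) / 2^(j+1+4) := by ring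
    rw [heq, div_le_div_iff₀ hpos (by norm_num : (0:ℝ) < 8)]
    nlinarith
  linarith

end Backward

/-- An unconditional Schauder basis fails to be boundedly complete iff the space contains a
closed subspace linearly isomorphic to `c₀`. -/
theorem not_boundedlyComplete_iff_contains_c0 {B : Type*} [NormedAddCommGroup B]
    [NormedSpace ℝ B] [CompleteSpace B] (z : ℕ → B)
    (hb : IsSchauderBasis z) (hu : IsUnconditional z) :
    ¬ BoundedlyComplete z ↔
      ∃ (T : ZeroAtInftyContinuousMap ℕ ℝ →L[ℝ] B) (c : ℝ), 0 < c ∧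
        ∀ v, c * ‖v‖ ≤ ‖T v‖ := by
  constructor
  · intro hnbc
    exact forward_direction hb hu hnbc
  · rintro ⟨T, c, hc, hlow⟩
    exact backward_direction hb hu T c hc hlow
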